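/- arXiv:2507.08830 — 5 statements merged into one kernel-verified Lean document; each statement's English description precedes it below -/
import Mathlib

section
/- Let p be a prime and let H be a nonempty multiset of positive integers, none of which is divisible by p, such that the product P of all elements of H satisfies P ≢ 1 (mod p). Suppose some heap h ∈ H satisfies h > p. Then there exists an integer r with 1 ≤ r < p and r < h such that p does not divide h − r and (∏ of (H with one copy of h removed)) · (h − r) ≡ 1 (mod p). -/
/-- MuM, Proposition "Winning to Losing": if a position (nonempty multiset of
positive heaps, none divisible by the prime `p`) has product `P ≢ 1 (mod p)`
and some heap `h > p`, then there is a legal move to a losing position. -/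
theorem mum_winning_to_losing (p : ℕ) (hp : p.Prime) (H : Multiset ℕ)
    (hne : H ≠ 0) (hpos : ∀ h ∈ H, 0 < h) (hndvd : ∀ h ∈ H, ¬ p ∣ h)
    (hwin : ¬ (H.prod ≡ 1 [MOD p]))
    (h : ℕ) (hmem : h ∈ H) (hbig : h > p) :
    ∃ r : ℕ, 1 ≤ r ∧ r < p ∧ r < h ∧ ¬ p ∣ (h - r) ∧
      (H.erase h).prod * (h - r) ≡ 1 [MOD p] := by
  haveI : Fact p.Prime := ⟨hp⟩
  set Q : ℕ := (H.erase h).prod with hQ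
  have hQdvd : ¬ p ∣ Q := by
    intro hd
    obtain ⟨a, haQ, hpa⟩ := hp.prime.exists_mem_multiset_dvd hd
    exact hndvd a (Multiset.mem_of_mem_erase haQ) hpa
  have hq0 : (Q : ZMod p) ≠ 0 := by
    rwa [Ne, ZMod.natCast_eq_zero_iff]
  set t : ZMod p := (Q : ZMod p)⁻¹ with ht
  have ht0 : t ≠ 0 := inv_ne_zero hq0
  have hqt : (Q : ZMod p) * t = 1 := mul_inv_cancel₀ hq0
  -- a = h - t in ZMod p
  set a : ZMod p := (h : ZMod p) - t with ha
  have ha0 : a ≠ 0 := by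
    intro h0
    have hht : (h : ZMod p) = t := by
      have := sub_eq_zero.mp h0; exact this
    apply hwin
    have hprod : h * Q = H.prod := Multiset.prod_erase hmem
    rw [← ZMod.natCast_eq_natCast_iff, ← hprod]
    push_cast
    rw [hht, mul_comm]
    exact hqt
  refine ⟨a.val, ?_, ?_, ?_, ?_, ?_⟩
  · exact Nat.one_le_iff_ne_zero.mpr (fun h0 => ha0 (ZMod.val_eq_zero a |>.mp h0))
  · exact ZMod.val_lt a
  · exact lt_trans (ZMod.val_lt a) hbig
  · have hle : a.val ≤ h := le_of_lt (lt_trans (ZMod.val_lt a) hbig)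
    rw [← ZMod.natCast_eq_zero_iff]
    push_cast [hle]
    rw [ZMod.natCast_val, ZMod.cast_id]
    intro h0
    apply ht0
    have : (h : ZMod p) - a = t := by rw [ha]; ring
    rw [← this, h0]
  · have hle : a.val ≤ h := le_of_lt (lt_trans (ZMod.val_lt a) hbig)
    rw [← ZMod.natCast_eq_natCast_iff]
    push_cast [hle]
    rw [ZMod.natCast_val, ZMod.cast_id]
    have : (h : ZMod p) - a = t := by rw [ha]; ring
    rw [this, hqt]
end

section
/- Let p be a prime and let H be a multiset of positive integers, none divisible by p, whose product satisfies ∏ H ≡ 1 (mod p). Then for every h ∈ H and every integer r with 1 ≤ r < p and r < h, the product after the move is not congruent to 1: (∏ of (H with one copy of h removed)) · (h − r) ≢ 1 (mod p). -/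
/-- MuM, Proposition "Losing to Winning": if the product of the heaps is
`≡ 1 (mod p)`, then every legal move leads to a position with product
`≢ 1 (mod p)`. -/
theorem mum_losing_to_winning (p : ℕ) (hp : p.Prime) (H : Multiset ℕ)
    (hpos : ∀ h ∈ H, 0 < h) (hndvd : ∀ h ∈ H, ¬ p ∣ h)
    (hlose : H.prod ≡ 1 [MOD p]) :
    ∀ h ∈ H, ∀ r : ℕ, 1 ≤ r → r < p → r < h →
      ¬ ((H.erase h).prod * (h - r) ≡ 1 [MOD p]) := by
  intro h hh r hr1 hrp hrh hcon
  haveI : Fact p.Prime := ⟨hp⟩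
  have hprod : h * (H.erase h).prod = H.prod := Multiset.prod_erase hh
  have h1 : ((H.erase h).prod : ZMod p) * (h : ZMod p) = 1 := by
    have := (ZMod.natCast_eq_natCast_iff _ _ _).mpr hlose
    rw [← hprod] at this
    push_cast at this ⊢
    linear_combination this
  have h2 : ((H.erase h).prod : ZMod p) * ((h : ZMod p) - (r : ZMod p)) = 1 := by
    have := (ZMod.natCast_eq_natCast_iff _ _ _).mpr hcon
    push_cast [Nat.cast_sub hrh.le] at this
    push_cast
    linear_combination this
  have h3 : ((H.erase h).prod : ZMod p) * (r : ZMod p) = 0 := by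
    have := h1.trans h2.symm
    ring_nf at this ⊢
    linear_combination h1 - h2
  have hr0 : (r : ZMod p) ≠ 0 := by
    rw [Ne, ZMod.natCast_eq_zero_iff]
    intro hdvd
    exact absurd (Nat.le_of_dvd (by omega) hdvd) (by omega)
  have ha : ((H.erase h).prod : ZMod p) ≠ 0 := by
    intro h0
    rw [h0, zero_mul] at h1
    exact one_ne_zero h1.symm
  exact hr0 (by
    rcases mul_eq_zero.mp h3 with h' | h'
    · exact absurd h' ha
    · exact h')
end

section
/- Let p be a prime and let H be a nonempty multiset of positive integers, none divisible by p, such that ∏ H ≢ 1 (mod p), and let h ∈ H satisfy h > p. Then there is exactly one integer r with 1 ≤ r ≤ p − 1 such that (∏ of (H with one copy of h removed)) · (h − r) ≡ 1 (mod p), and for this r the move is legal, i.e. r < h and p ∤ (h − r). -/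
/-- MuM: from a winning position with a heap `h > p`, there is exactly one
reduction amount `r` with `1 ≤ r ≤ p - 1` making the new product `≡ 1 (mod p)`,
and this unique `r` gives a legal move (`r < h` and `p ∤ (h - r)`). -/
theorem mum_unique_winning_move (p : ℕ) (hp : p.Prime) (H : Multiset ℕ)
    (hne : H ≠ 0) (hpos : ∀ h ∈ H, 0 < h) (hndvd : ∀ h ∈ H, ¬ p ∣ h)
    (hwin : ¬ (H.prod ≡ 1 [MOD p]))
    (h : ℕ) (hmem : h ∈ H) (hbig : h > p) :
    (∃! r : ℕ, 1 ≤ r ∧ r ≤ p - 1 ∧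
        (H.erase h).prod * (h - r) ≡ 1 [MOD p]) ∧
    (∀ r : ℕ, 1 ≤ r → r ≤ p - 1 →
        (H.erase h).prod * (h - r) ≡ 1 [MOD p] →
        r < h ∧ ¬ p ∣ (h - r)) := by
  haveI : Fact p.Prime := ⟨hp⟩
  have hp1 : 1 < p := hp.one_lt
  set A := (H.erase h).prod with hAdef
  have hAh : h * A = H.prod := Multiset.prod_erase hmem
  have hAnd : ¬ p ∣ A := by
    intro hd
    obtain ⟨a, haA, hpa⟩ := hp.prime.exists_mem_multiset_dvd hd
    exact hndvd a (Multiset.mem_of_mem_erase haA) hpa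
  have ha0 : (A : ZMod p) ≠ 0 := by
    rwa [Ne, ZMod.natCast_eq_zero_iff]
  -- key: a residue argument
  have modeq_iff : ∀ n m : ℕ, (n ≡ m [MOD p]) ↔ (n : ZMod p) = m := by
    intro n m; exact (ZMod.natCast_eq_natCast_iff n m p).symm
  -- for any r with 1 ≤ r ≤ p-1, the congruence holds iff (h - r : ZMod p) = A⁻¹
  have hsub : ∀ r : ℕ, r ≤ p - 1 → ((h - r : ℕ) : ZMod p) = (h : ZMod p) - r := by
    intro r hr
    have : r ≤ h := le_trans (le_trans hr (Nat.sub_le p 1)) (le_of_lt hbig)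
    exact_mod_cast Nat.cast_sub this
  have key : ∀ r : ℕ, 1 ≤ r → r ≤ p - 1 →
      ((A * (h - r) ≡ 1 [MOD p]) ↔ (r : ZMod p) = (h : ZMod p) - (A : ZMod p)⁻¹) := by
    intro r hr1 hr2
    rw [modeq_iff]
    push_cast
    rw [hsub r hr2]
    constructor
    · intro hEq
      have : ((h : ZMod p) - r) = (A : ZMod p)⁻¹ := by
        field_simp at hEq ⊢
        linear_combination hEq
      linear_combination -this
    · intro hEq
      rw [show (h : ZMod p) - r = (A : ZMod p)⁻¹ by linear_combination -hEq]
      field_simp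
  set r0 : ℕ := ((h : ZMod p) - (A : ZMod p)⁻¹).val with hr0def
  have hr0lt : r0 < p := ZMod.val_lt _
  have hr0cast : (r0 : ZMod p) = (h : ZMod p) - (A : ZMod p)⁻¹ := by
    simp [hr0def, ZMod.natCast_val, ZMod.cast_id]
  have hr0ne : r0 ≠ 0 := by
    intro h0
    have : (h : ZMod p) = (A : ZMod p)⁻¹ := by
      have := hr0cast
      rw [h0] at this
      push_cast at this
      linear_combination -this
    have hprod : ((H.prod : ℕ) : ZMod p) = 1 := by
      rw [← hAh]; push_cast
      rw [this]
      field_simp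
    exact hwin ((modeq_iff H.prod 1).2 (by exact_mod_cast hprod))
  have hr0le : r0 ≤ p - 1 := Nat.le_sub_one_of_lt hr0lt
  have hr01 : 1 ≤ r0 := Nat.one_le_iff_ne_zero.2 hr0ne
  constructor
  · refine ⟨r0, ⟨hr01, hr0le, (key r0 hr01 hr0le).2 hr0cast⟩, ?_⟩
    rintro r ⟨hr1, hr2, hrmod⟩
    have h1 : (r : ZMod p) = (r0 : ZMod p) := by
      rw [(key r hr1 hr2).1 hrmod, hr0cast]
    have hrlt : r < p := lt_of_le_of_lt hr2 (Nat.sub_lt hp.pos one_pos)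
    have := (ZMod.natCast_eq_natCast_iff r r0 p).1 h1
    have := Nat.ModEq.eq_of_lt_of_lt this hrlt hr0lt
    exact this
  · intro r hr1 hr2 hrmod
    have hrlt : r < h := lt_of_le_of_lt (le_trans hr2 (Nat.sub_le p 1)) hbig
    refine ⟨hrlt, ?_⟩
    intro hdvd
    have : ((h - r : ℕ) : ZMod p) = 0 := by
      rwa [ZMod.natCast_eq_zero_iff]
    have h1 : ((A * (h - r) : ℕ) : ZMod p) = 1 := by
      have := (modeq_iff (A * (h - r)) 1).1 hrmod
      exact_mod_cast this
    rw [Nat.cast_mul, this, mul_zero] at h1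
    exact zero_ne_one h1
end

section
/- Let p be a prime and let Lose be any predicate on positive integers not divisible by p satisfying the recursion: for every such h, Lose(h) holds if and only if for every integer r with 1 ≤ r < p, r < h, and p ∤ (h − r), Lose(h − r) fails. Then for every positive integer h not divisible by p, Lose(h) holds if and only if h ≡ 1 (mod p). -/
/-- Single-heap MuM with prime modulus `p`: if `Lose` satisfies the P-position
recursion (a position is losing iff every legal move leads to a non-losing
position), then a heap `h` (with `0 < h`, `p ∤ h`) is losing iff `h ≡ 1 (mod p)`. -/
theorem mum_single_heap_p_positions (p : ℕ) (hp : p.Prime) (Lose : ℕ → Prop)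
    (hLose : ∀ h : ℕ, 0 < h → ¬ p ∣ h →
      (Lose h ↔ ∀ r : ℕ, 1 ≤ r → r < p → r < h → ¬ p ∣ (h - r) → ¬ Lose (h - r))) :
    ∀ h : ℕ, 0 < h → ¬ p ∣ h → (Lose h ↔ h ≡ 1 [MOD p]) := by
  intro h
  induction h using Nat.strong_induction_on with
  | _ h ih =>
    intro hpos hnd
    have hp2 : 2 ≤ p := hp.two_le
    have h1p : (1 : ℕ) % p = 1 := Nat.mod_eq_of_lt (by omega)
    rw [hLose h hpos hnd]
    constructor
    · intro hall
      by_contra hne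
      have hm0 : h % p ≠ 0 := fun h0 => hnd (Nat.dvd_of_mod_eq_zero h0)
      have hm1 : h % p ≠ 1 := by
        intro h1
        exact hne (by unfold Nat.ModEq; omega)
      set m := h % p with hm
      have hmlt : m < p := Nat.mod_lt _ (by omega)
      have hmle : m ≤ h := Nat.mod_le _ _
      have hm2 : 2 ≤ m := by omega
      set r := m - 1 with hr
      have hsub : h - r = (h - m) + 1 := by omega
      have hdm : h - m = p * (h / p) := by
        have := Nat.mod_add_div h p
        omega
      have hmod : (h - r) % p = 1 := by
        rw [hsub, hdm, Nat.mul_add_mod]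
        exact h1p
      have hnd' : ¬ p ∣ (h - r) := by
        intro hd
        have h0 : (h - r) % p = 0 := Nat.mod_eq_zero_of_dvd hd
        omega
      have hpos' : 0 < h - r := by omega
      have hlt : h - r < h := by omega
      have hL : Lose (h - r) := by
        rw [ih (h - r) hlt hpos' hnd']
        unfold Nat.ModEq; omega
      exact hall r (by omega) (by omega) (by omega) hnd' hL
    · intro hmod r hr1 hrp hrh hnd' hL
      have hlt : h - r < h := by omega
      have hpos' : 0 < h - r := by omega
      have hmod' : (h - r) ≡ 1 [MOD p] := (ih (h - r) hlt hpos' hnd').mp hL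
      have : (h - r) ≡ h [MOD p] := hmod'.trans hmod.symm
      have hdvd : p ∣ h - (h - r) := (Nat.modEq_iff_dvd' (by omega)).mp this
      have : h - (h - r) = r := by omega
      rw [this] at hdvd
      exact absurd (Nat.le_of_dvd (by omega) hdvd) (by omega)
end

section
/- Let p be a prime, let t ≥ 1, and let h₁, …, h_t be positive integers none divisible by p, with product P = ∏ h_i. Fix an index i, set α = ∏_{j ≠ i} h_j, and suppose each option value is given by the induction hypothesis, i.e. the option obtained by subtracting r (1 ≤ r ≤ p − 1) from h_i has value (h_i − r)·α in ZMod p. Then the set of option values {(h_i − r)·α mod p : 1 ≤ r ≤ p − 1} equals {0, 1, …, p − 1} \ {P mod p}, and consequently the least residue in {0, 1, …, p − 1} not attained as an option value is P mod p. -/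
/-- Induction step of the MuM Grundy-Mex theorem: with `α` the product of the
other heaps mod `p` and `P` the full product, the option values
`(h i - r) * α` for `1 ≤ r ≤ p - 1` attain exactly the residues other than
`P mod p`, so the least unattained residue is `P % p`. -/
theorem mum_induction_step (p : ℕ) (hp : p.Prime) (t : ℕ) (ht : 1 ≤ t)
    (h : Fin t → ℕ) (hpos : ∀ j, 0 < h j) (hndvd : ∀ j, ¬ p ∣ h j)
    (i : Fin t) (P : ℕ) (hP : P = ∏ j : Fin t, h j)
    (α : ZMod p) (hα : α = ∏ j ∈ Finset.univ.erase i, (h j : ZMod p)) :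
    {x : ZMod p | ∃ r : ℕ, 1 ≤ r ∧ r ≤ p - 1 ∧ x = ((h i : ZMod p) - r) * α} =
      {x : ZMod p | x ≠ (P : ZMod p)} ∧
    sInf {n : ℕ | ∀ r : ℕ, 1 ≤ r → r ≤ p - 1 →
        ((h i : ZMod p) - r) * α ≠ (n : ZMod p)} = P % p := by
  haveI : Fact p.Prime := ⟨hp⟩
  have hp2 : 2 ≤ p := hp.two_le
  have hne : ∀ j, (h j : ZMod p) ≠ 0 := by
    intro j hj
    exact hndvd j ((ZMod.natCast_eq_zero_iff _ _).mp hj)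
  have hαne : α ≠ 0 := by
    rw [hα]
    exact Finset.prod_ne_zero_iff.mpr fun j _ => hne j
  have hPα : (P : ZMod p) = (h i : ZMod p) * α := by
    rw [hP, hα, Nat.cast_prod, ← Finset.mul_prod_erase _ _ (Finset.mem_univ i)]
  -- key: (r : ZMod p) ≠ 0 for 1 ≤ r ≤ p - 1
  have hrne : ∀ r : ℕ, 1 ≤ r → r ≤ p - 1 → (r : ZMod p) ≠ 0 := by
    intro r h1 h2 hr0
    have hdvd := (ZMod.natCast_eq_zero_iff _ _).mp hr0
    have : r < p := lt_of_le_of_lt h2 (Nat.sub_lt (by omega) one_pos)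
    have := Nat.le_of_dvd (by omega) hdvd
    omega
  have hset : {x : ZMod p | ∃ r : ℕ, 1 ≤ r ∧ r ≤ p - 1 ∧
      x = ((h i : ZMod p) - r) * α} = {x : ZMod p | x ≠ (P : ZMod p)} := by
    ext x
    simp only [Set.mem_setOf_eq]
    constructor
    · rintro ⟨r, h1, h2, rfl⟩
      rw [hPα]
      intro hEq
      have := mul_right_cancel₀ hαne hEq
      have : (r : ZMod p) = 0 := by linear_combination -this
      exact hrne r h1 h2 this
    · intro hx
      set ρ : ZMod p := (h i : ZMod p) - x * α⁻¹ with hρ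
      have hρne : ρ ≠ 0 := by
        intro h0
        apply hx
        rw [hPα]
        have h1 := sub_eq_zero.mp h0
        field_simp at h1
        exact h1.symm
      refine ⟨ρ.val, ?_, ?_, ?_⟩
      · have := ZMod.val_ne_zero ρ |>.mpr hρne
        omega
      · have := ZMod.val_lt ρ
        omega
      · have hval : ((ρ.val : ℕ) : ZMod p) = ρ := by
          rw [ZMod.natCast_val, ZMod.cast_id]
        rw [hval, hρ]
        field_simp
        ring
  refine ⟨hset, ?_⟩
  have hset2 : {n : ℕ | ∀ r : ℕ, 1 ≤ r → r ≤ p - 1 →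
      ((h i : ZMod p) - r) * α ≠ (n : ZMod p)} =
      {n : ℕ | (n : ZMod p) = (P : ZMod p)} := by
    ext n
    simp only [Set.mem_setOf_eq]
    constructor
    · intro hn
      by_contra hne'
      have : (n : ZMod p) ∈ {x : ZMod p | x ≠ (P : ZMod p)} := hne'
      rw [← hset] at this
      obtain ⟨r, h1, h2, hr⟩ := this
      exact hn r h1 h2 hr.symm
    · intro hn r h1 h2 hr
      have : ((h i : ZMod p) - r) * α ∈ {x : ZMod p | x ≠ (P : ZMod p)} := by
        rw [← hset]; exact ⟨r, h1, h2, rfl⟩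
      exact this (hr.trans hn)
  rw [hset2]
  have hmem : P % p ∈ {n : ℕ | (n : ZMod p) = (P : ZMod p)} := by
    simp [ZMod.natCast_mod]
  apply le_antisymm
  · exact Nat.sInf_le hmem
  · refine le_csInf ⟨_, hmem⟩ ?_
    intro n hn
    have h2 : n % p = P % p := (ZMod.natCast_eq_natCast_iff _ _ _).mp hn
    calc P % p = n % p := h2.symm
      _ ≤ n := Nat.mod_le n p
end
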